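/- For any triple (α,β,γ) ∈ ℕ³, the ideal of ℝ[z₁,z₂] generated by the three polynomials B#_{α+1,β,γ}, B#_{α,β+1,γ}, and B#_{α,β,γ+1} equals the principal ideal generated by B#_{α,β,γ}. -/
import Mathlib


open MvPolynomial

/-- The normalized three-directional box spline symbol
`B#_{α,β,γ}(z₁,z₂) = ((1+z₁)/2)^α ((1+z₂)/2)^β ((1+z₁z₂)/2)^γ`. -/
noncomputable def Bs (α β γ : ℕ) : MvPolynomial (Fin 2) ℝ :=
  (C (1 / 2 : ℝ) * (1 + X 0)) ^ α * (C (1 / 2 : ℝ) * (1 + X 1)) ^ β *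
    (C (1 / 2 : ℝ) * (1 + X 0 * X 1)) ^ γ

/-- The ideal generated by `B#_{α+1,β,γ}`, `B#_{α,β+1,γ}`, `B#_{α,β,γ+1}` equals the
principal ideal generated by `B#_{α,β,γ}`. -/
theorem stmt_10 (α β γ : ℕ) :
    Ideal.span ({Bs (α + 1) β γ, Bs α (β + 1) γ, Bs α β (γ + 1)} :
        Set (MvPolynomial (Fin 2) ℝ)) =
      Ideal.span ({Bs α β γ} : Set (MvPolynomial (Fin 2) ℝ)) := by
  apply le_antisymm
  · rw [Ideal.span_le]
    rintro p hp
    simp only [Set.mem_insert_iff, Set.mem_singleton_iff] at hp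
    rcases hp with h | h | h <;> subst h <;> rw [SetLike.mem_coe, Ideal.mem_span_singleton]
    · exact ⟨C (1 / 2 : ℝ) * (1 + X 0), by simp only [Bs]; ring⟩
    · exact ⟨C (1 / 2 : ℝ) * (1 + X 1), by simp only [Bs]; ring⟩
    · exact ⟨C (1 / 2 : ℝ) * (1 + X 0 * X 1), by simp only [Bs]; ring⟩
  · rw [Ideal.span_le, Set.singleton_subset_iff, SetLike.mem_coe]
    have h1 : Bs (α + 1) β γ ∈ Ideal.span ({Bs (α + 1) β γ, Bs α (β + 1) γ, Bs α β (γ + 1)} :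
        Set (MvPolynomial (Fin 2) ℝ)) := Ideal.subset_span (by simp)
    have h2 : Bs α (β + 1) γ ∈ Ideal.span ({Bs (α + 1) β γ, Bs α (β + 1) γ, Bs α β (γ + 1)} :
        Set (MvPolynomial (Fin 2) ℝ)) := Ideal.subset_span (by simp)
    have h3 : Bs α β (γ + 1) ∈ Ideal.span ({Bs (α + 1) β γ, Bs α (β + 1) γ, Bs α β (γ + 1)} :
        Set (MvPolynomial (Fin 2) ℝ)) := Ideal.subset_span (by simp)
    have key : Bs α β γ = Bs (α + 1) β γ + Bs α (β + 1) γ + Bs α β (γ + 1)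
        - (1 + X 1) * Bs (α + 1) β γ := by
      have hC : (C (1 / 2 : ℝ) : MvPolynomial (Fin 2) ℝ) * 2 = 1 := by
        rw [show (2 : MvPolynomial (Fin 2) ℝ) = C 2 from (map_ofNat C 2).symm, ← C_mul]
        norm_num
      simp only [Bs]
      linear_combination (-((C (1 / 2 : ℝ) * (1 + X 0)) ^ α * (C (1 / 2 : ℝ) * (1 + X 1)) ^ β *
        (C (1 / 2 : ℝ) * (1 + X 0 * X 1)) ^ γ)) * hC
    rw [key]
    exact sub_mem (add_mem (add_mem h1 h2) h3) (Ideal.mul_mem_left _ _ h1)
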